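/- Let X and Y be real n×n matrices with X symmetric. Then ‖XY − YX‖_F² ≤ 2·‖X‖_F²·‖Y‖_F², where ‖M‖_F² = ∑_{i,j} M_{ij}² is the squared Frobenius norm. -/

import Mathlib

open Matrix Finset

private lemma frob_eq_trace {n : ℕ} (M : Matrix (Fin n) (Fin n) ℝ) :
    ∑ i, ∑ j, (M i j) ^ 2 = Matrix.trace (Mᵀ * M) := by
  rw [Matrix.trace]
  rw [Finset.sum_comm]
  simp [Matrix.mul_apply, Matrix.diag, Matrix.transpose_apply, sq]

private lemma frob_conj {n : ℕ} (U A : Matrix (Fin n) (Fin n) ℝ)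
    (hU1 : Uᵀ * U = 1) (hU2 : U * Uᵀ = 1) :
    ∑ i, ∑ j, ((U * A * Uᵀ) i j) ^ 2 = ∑ i, ∑ j, (A i j) ^ 2 := by
  rw [frob_eq_trace, frob_eq_trace]
  have : (U * A * Uᵀ)ᵀ * (U * A * Uᵀ) = U * (Aᵀ * A) * Uᵀ := by
    have ht : (U * A * Uᵀ)ᵀ = U * Aᵀ * Uᵀ := by
      simp [Matrix.transpose_mul, Matrix.mul_assoc]
    rw [ht]
    calc U * Aᵀ * Uᵀ * (U * A * Uᵀ)
        = U * Aᵀ * (Uᵀ * U) * (A * Uᵀ) := by noncomm_ring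
      _ = U * (Aᵀ * A) * Uᵀ := by rw [hU1]; noncomm_ring
  rw [this, Matrix.trace_mul_cycle, ← Matrix.mul_assoc, hU1, Matrix.one_mul]

/-- For real `n×n` matrices `X, Y` with `X` symmetric, the commutator satisfies
`‖XY − YX‖_F² ≤ 2‖X‖_F²‖Y‖_F²`, where `‖M‖_F² = ∑_{i,j} M_{ij}²`. -/
theorem stmt_13 {n : ℕ} (X Y : Matrix (Fin n) (Fin n) ℝ) (hX : X.IsSymm) :
    ∑ i, ∑ j, ((X * Y - Y * X) i j) ^ 2 ≤
      2 * (∑ i, ∑ j, (X i j) ^ 2) * (∑ i, ∑ j, (Y i j) ^ 2) := by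
  have hH : X.IsHermitian := by
    rw [Matrix.IsHermitian, Matrix.conjTranspose_eq_transpose_of_trivial]; exact hX
  set U : Matrix (Fin n) (Fin n) ℝ := (hH.eigenvectorUnitary : Matrix (Fin n) (Fin n) ℝ) with hUdef
  set d : Fin n → ℝ := hH.eigenvalues with hd
  have hstar : star U = Uᵀ := by
    rw [Matrix.star_eq_conjTranspose, Matrix.conjTranspose_eq_transpose_of_trivial]
  have hU1 : Uᵀ * U = 1 := by
    rw [← hstar]; exact (Matrix.mem_unitaryGroup_iff').mp (hH.eigenvectorUnitary).2
  have hU2 : U * Uᵀ = 1 := by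
    rw [← hstar]; exact (Matrix.mem_unitaryGroup_iff).mp (hH.eigenvectorUnitary).2
  have hXspec : X = U * Matrix.diagonal d * Uᵀ := by
    have := hH.spectral_theorem
    simp only [Unitary.conjStarAlgAut_apply, Unitary.coe_star] at this
    rw [this, ← hstar]
    congr 2
  set Z : Matrix (Fin n) (Fin n) ℝ := Uᵀ * Y * U with hZ
  have hY : Y = U * Z * Uᵀ := by
    rw [hZ]
    calc Y = (U * Uᵀ) * Y * (U * Uᵀ) := by rw [hU2]; noncomm_ring
      _ = U * (Uᵀ * Y * U) * Uᵀ := by noncomm_ring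
  have hcomm : X * Y - Y * X = U * (Matrix.diagonal d * Z - Z * Matrix.diagonal d) * Uᵀ := by
    rw [hXspec, hY]
    calc U * Matrix.diagonal d * Uᵀ * (U * Z * Uᵀ) - U * Z * Uᵀ * (U * Matrix.diagonal d * Uᵀ)
        = U * Matrix.diagonal d * (Uᵀ * U) * Z * Uᵀ
          - U * Z * (Uᵀ * U) * Matrix.diagonal d * Uᵀ := by noncomm_ring
      _ = U * (Matrix.diagonal d * Z - Z * Matrix.diagonal d) * Uᵀ := by
          rw [hU1]; noncomm_ring
  have hFX : ∑ i, ∑ j, (X i j) ^ 2 = ∑ k, (d k) ^ 2 := by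
    rw [hXspec, frob_conj _ _ hU1 hU2]
    simp [Matrix.diagonal_apply, Finset.sum_ite_eq, sq]
  have hFY : ∑ i, ∑ j, (Y i j) ^ 2 = ∑ i, ∑ j, (Z i j) ^ 2 := by
    rw [hY, frob_conj _ _ hU1 hU2]
  have hFC : ∑ i, ∑ j, ((X * Y - Y * X) i j) ^ 2
      = ∑ i, ∑ j, ((d i - d j) * Z i j) ^ 2 := by
    rw [hcomm, frob_conj _ _ hU1 hU2]
    refine Finset.sum_congr rfl fun i _ => Finset.sum_congr rfl fun j _ => ?_
    simp [Matrix.sub_apply, Matrix.diagonal_mul, Matrix.mul_diagonal, sub_mul, mul_comm]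
  have hbound : ∀ i j : Fin n, (d i - d j) ^ 2 ≤ 2 * ∑ k, (d k) ^ 2 := by
    intro i j
    rcases eq_or_ne i j with rfl | hij
    · have h0 := Finset.sum_nonneg (fun k (_ : k ∈ Finset.univ) => sq_nonneg (d k))
      simp only [sub_self]
      nlinarith
    · have h1 : (d i - d j) ^ 2 ≤ 2 * ((d i) ^ 2 + (d j) ^ 2) := by nlinarith [sq_nonneg (d i + d j)]
      have h2 : (d i) ^ 2 + (d j) ^ 2 ≤ ∑ k, (d k) ^ 2 := by
        have : ∑ k ∈ ({i, j} : Finset (Fin n)), (d k) ^ 2 ≤ ∑ k, (d k) ^ 2 :=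
          Finset.sum_le_sum_of_subset_of_nonneg (Finset.subset_univ _)
            (fun k _ _ => sq_nonneg _)
        rwa [Finset.sum_pair hij] at this
      linarith
  rw [hFC, hFX, hFY]
  calc ∑ i, ∑ j, ((d i - d j) * Z i j) ^ 2
      ≤ ∑ i, ∑ j, (2 * ∑ k, (d k) ^ 2) * (Z i j) ^ 2 := by
        apply Finset.sum_le_sum; intro i _
        apply Finset.sum_le_sum; intro j _
        rw [mul_pow]
        exact mul_le_mul_of_nonneg_right (hbound i j) (sq_nonneg _)
    _ = 2 * (∑ k, (d k) ^ 2) * ∑ i, ∑ j, (Z i j) ^ 2 := by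
        set c := 2 * ∑ k, (d k) ^ 2 with hc
        rw [Finset.mul_sum]
        exact Finset.sum_congr rfl fun i _ => (Finset.mul_sum _ _ _).symm
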